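/- Let γ > 2, s ≥ 1, and c₀, c₀', c, c' > 0. Let (Ω, F, P) be a probability space with filtration (F_n)_{n≥0}, and let (Λ_n)_{n≥0} be an adapted sequence of random vectors in ℝ^q with E‖Λ_n‖₂^γ < ∞ for all n, E‖Λ_0‖₂^γ ≤ c·s^{γ−1}, E‖Λ_0‖₂² ≤ c·s, and satisfying almost surely for every n ≥ 0 the two drift conditions: E[‖Λ_{n+1}‖₂^γ | F_n] ≤ ‖Λ_n‖₂^γ − γc₀‖Λ_n‖₂^{γ−1} + c(s^{γ/2} + s‖Λ_n‖₂^{γ−2}) and E[‖Λ_{n+1}‖₂² | F_n] ≤ ‖Λ_n‖₂² − c₀'‖Λ_n‖₂ + c's. Then there exists a constant C > 0, depending only on γ, c₀, c₀', c, c', such that E‖Λ_n‖₂² ≤ C(n+1)^{1/(γ−1)} s^{(2γ−3)/(γ−1)} for all n ≥ 0. -/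

import Mathlib

open MeasureTheory

private lemma arcs_pow_le_one_add {γ p t : ℝ} (ht : 0 ≤ t) (hp : 0 ≤ p) (hpγ : p ≤ γ) :
    t ^ p ≤ 1 + t ^ γ := by
  rcases le_or_gt t 1 with h | h
  · have h1 : t ^ p ≤ 1 := Real.rpow_le_one ht h hp
    have h2 : 0 ≤ t ^ γ := Real.rpow_nonneg ht γ
    linarith
  · have h1 : t ^ p ≤ t ^ γ := Real.rpow_le_rpow_of_exponent_le h.le hpγ
    linarith

private lemma arcs_young {γ c₀ c s t : ℝ} (hγ : 2 < γ) (hs : 1 ≤ s)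
    (hc₀ : 0 < c₀) (hc : 0 < c) (ht : 0 ≤ t) :
    c * (s ^ (γ / 2) + s * t ^ (γ - 2)) - γ * c₀ * t ^ (γ - 1)
      ≤ (c + c * (c / (γ * c₀)) ^ (γ - 2)) * s ^ (γ - 1) := by
  have hs0 : (0:ℝ) < s := lt_of_lt_of_le one_pos hs
  have hγc₀ : 0 < γ * c₀ := mul_pos (by linarith) hc₀
  have h1 : s ^ (γ / 2) ≤ s ^ (γ - 1) :=
    Real.rpow_le_rpow_of_exponent_le hs (by linarith)
  have hA : c * s ^ (γ / 2) ≤ c * s ^ (γ - 1) := mul_le_mul_of_nonneg_left h1 hc.le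
  have hkey : c * s * t ^ (γ - 2) ≤ γ * c₀ * t ^ (γ - 1)
      + c * (c / (γ * c₀)) ^ (γ - 2) * s ^ (γ - 1) := by
    set B : ℝ := c / (γ * c₀) * s with hB
    have hBpos : 0 < B := mul_pos (div_pos hc hγc₀) hs0
    have h4 : s * s ^ (γ - 2) = s ^ (γ - 1) := by
      have h := Real.rpow_add hs0 1 (γ - 2)
      rw [Real.rpow_one] at h
      rw [← h]; ring_nf
    rcases le_or_gt t B with h | h
    · have h2 : t ^ (γ - 2) ≤ B ^ (γ - 2) := Real.rpow_le_rpow ht h (by linarith)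
      have h3 : B ^ (γ - 2) = (c / (γ * c₀)) ^ (γ - 2) * s ^ (γ - 2) :=
        Real.mul_rpow (le_of_lt (div_pos hc hγc₀)) hs0.le
      have h5 : c * s * t ^ (γ - 2) ≤ c * s * ((c / (γ * c₀)) ^ (γ - 2) * s ^ (γ - 2)) := by
        rw [← h3]; exact mul_le_mul_of_nonneg_left h2 (by positivity)
      have h6 : c * s * ((c / (γ * c₀)) ^ (γ - 2) * s ^ (γ - 2))
          = c * (c / (γ * c₀)) ^ (γ - 2) * s ^ (γ - 1) := by
        rw [← h4]; ring
      have h7 : 0 ≤ γ * c₀ * t ^ (γ - 1) := by positivity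
      linarith
    · have ht0 : 0 < t := hBpos.trans h
      have h2 : t ^ (γ - 1) = t * t ^ (γ - 2) := by
        have h' := Real.rpow_add ht0 1 (γ - 2)
        rw [Real.rpow_one] at h'
        rw [show γ - 1 = 1 + (γ - 2) by ring, h']
      have h3 : c * s = γ * c₀ * B := by
        rw [hB]; field_simp
      have h4' : (0:ℝ) < t ^ (γ - 2) := Real.rpow_pos_of_pos ht0 _
      have h5 : (0:ℝ) ≤ c * (c / (γ * c₀)) ^ (γ - 2) * s ^ (γ - 1) := by positivity
      calc c * s * t ^ (γ - 2) = γ * c₀ * B * t ^ (γ - 2) := by rw [h3]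
        _ ≤ γ * c₀ * t * t ^ (γ - 2) := by
            have hmm := mul_le_mul_of_nonneg_left
              (mul_le_mul_of_nonneg_right h.le h4'.le) hγc₀.le
            nlinarith [hmm]
        _ = γ * c₀ * t ^ (γ - 1) := by rw [h2]; ring
        _ ≤ _ := by linarith
  nlinarith [hA, hkey]

private lemma arcs_sq_le {γ l t : ℝ} (hγ : 2 < γ) (hl : 0 < l) (ht : 0 ≤ t) :
    t ^ (2 : ℕ) ≤ l * t + t ^ γ / l ^ (γ - 2) := by
  have hlp : (0:ℝ) < l ^ (γ - 2) := Real.rpow_pos_of_pos hl _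
  rcases le_or_gt t l with h | h
  · have h1 : t ^ (2:ℕ) ≤ l * t := by nlinarith
    have h2 : (0:ℝ) ≤ t ^ γ / l ^ (γ - 2) := by positivity
    linarith
  · have ht0 : 0 < t := hl.trans h
    have h1 : t ^ γ = t ^ (2:ℕ) * t ^ (γ - 2) := by
      have h'' : t ^ (((2:ℕ)):ℝ) = t ^ (2:ℕ) := Real.rpow_natCast t 2
      rw [← h'', ← Real.rpow_add ht0, show (((2:ℕ)):ℝ) + (γ - 2) = γ by push_cast; ring]
    have h2 : l ^ (γ - 2) ≤ t ^ (γ - 2) := Real.rpow_le_rpow hl.le h.le (by linarith)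
    have h3 : t ^ (2:ℕ) * l ^ (γ - 2) ≤ t ^ γ := by
      rw [h1]; exact mul_le_mul_of_nonneg_left h2 (by positivity)
    have h4 : t ^ (2:ℕ) ≤ t ^ γ / l ^ (γ - 2) := (le_div_iff₀ hlp).mpr h3
    have h5 : (0:ℝ) ≤ l * t := by positivity
    linarith

set_option maxHeartbeats 1600000 in
/-- Under the two drift conditions for the imbalance process of the ARCS procedure, the
second moment satisfies `E‖Λ_n‖² ≤ C(n+1)^{1/(γ−1)} s^{(2γ−3)/(γ−1)}`. -/
theorem imbalance_second_moment_rate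
    {Ω : Type*} {m0 : MeasurableSpace Ω} (μ : Measure Ω) [IsProbabilityMeasure μ]
    (F : Filtration ℕ m0) (q : ℕ)
    (Λ : ℕ → Ω → EuclideanSpace ℝ (Fin q))
    (hadapted : Adapted F Λ)
    (γ s c₀ c₀' c c' : ℝ) (hγ : 2 < γ) (hs : 1 ≤ s)
    (hc₀ : 0 < c₀) (hc₀' : 0 < c₀') (hc : 0 < c) (hc' : 0 < c')
    (hint : ∀ n, Integrable (fun ω => ‖Λ n ω‖ ^ γ) μ)
    (hinit_gamma : ∫ ω, ‖Λ 0 ω‖ ^ γ ∂μ ≤ c * s ^ (γ - 1))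
    (hinit_two : ∫ ω, ‖Λ 0 ω‖ ^ (2 : ℕ) ∂μ ≤ c * s)
    (hdrift_gamma : ∀ n : ℕ, ∀ᵐ ω ∂μ,
      (μ[fun ω => ‖Λ (n + 1) ω‖ ^ γ | F n]) ω
        ≤ ‖Λ n ω‖ ^ γ - γ * c₀ * ‖Λ n ω‖ ^ (γ - 1)
          + c * (s ^ (γ / 2) + s * ‖Λ n ω‖ ^ (γ - 2)))
    (hdrift_two : ∀ n : ℕ, ∀ᵐ ω ∂μ,
      (μ[fun ω => ‖Λ (n + 1) ω‖ ^ (2 : ℕ) | F n]) ω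
        ≤ ‖Λ n ω‖ ^ (2 : ℕ) - c₀' * ‖Λ n ω‖ + c' * s) :
    ∃ C : ℝ, 0 < C ∧ ∀ n : ℕ,
      ∫ ω, ‖Λ n ω‖ ^ (2 : ℕ) ∂μ
        ≤ C * ((n : ℝ) + 1) ^ (1 / (γ - 1)) * s ^ ((2 * γ - 3) / (γ - 1)) := by
  have hγ2 : (0:ℝ) < γ - 2 := by linarith
  have hγ1 : (0:ℝ) < γ - 1 := by linarith
  have hs0 : (0:ℝ) < s := lt_of_lt_of_le one_pos hs
  -- measurability and integrability
  have hmeas : ∀ n, Measurable fun ω => ‖Λ n ω‖ := fun n =>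
    ((hadapted n).mono (F.le n) le_rfl).norm
  have hmr : ∀ n, ∀ p : ℝ, 0 ≤ p → Measurable fun ω => ‖Λ n ω‖ ^ p := fun n p hp =>
    (Real.continuous_rpow_const hp).measurable.comp (hmeas n)
  have hintp : ∀ n, ∀ p : ℝ, 0 ≤ p → p ≤ γ → Integrable (fun ω => ‖Λ n ω‖ ^ p) μ := by
    intro n p hp hpγ
    refine ((integrable_const (1:ℝ)).add (hint n)).mono' (hmr n p hp).aestronglyMeasurable ?_
    filter_upwards with ω
    rw [Real.norm_eq_abs, abs_of_nonneg (Real.rpow_nonneg (norm_nonneg _) p)]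
    exact arcs_pow_le_one_add (norm_nonneg _) hp hpγ
  have hint1 : ∀ n, Integrable (fun ω => ‖Λ n ω‖) μ := by
    intro n
    simpa [Real.rpow_one] using hintp n 1 zero_le_one (by linarith)
  have hint2 : ∀ n, Integrable (fun ω => ‖Λ n ω‖ ^ (2:ℕ)) μ := by
    intro n
    refine (hintp n 2 (by norm_num) (by linarith)).congr
      (Filter.Eventually.of_forall fun ω => ?_)
    show ‖Λ n ω‖ ^ (2:ℝ) = ‖Λ n ω‖ ^ (2:ℕ)
    rw [← Real.rpow_natCast (‖Λ n ω‖) 2]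
    norm_num
  set a : ℕ → ℝ := fun n => ∫ ω, ‖Λ n ω‖ ^ γ ∂μ with ha
  set b : ℕ → ℝ := fun n => ∫ ω, ‖Λ n ω‖ ^ (2:ℕ) ∂μ with hbdef
  set M : ℕ → ℝ := fun n => ∫ ω, ‖Λ n ω‖ ∂μ with hMdef
  have hM0 : ∀ n, 0 ≤ M n := fun n => integral_nonneg fun ω => norm_nonneg _
  -- Step A : growth of the γ-moment
  set K₁ : ℝ := c + c * (c / (γ * c₀)) ^ (γ - 2) with hK₁
  have hK₁0 : 0 < K₁ := by positivity
  have hstepA : ∀ n, a (n+1) ≤ a n + K₁ * s ^ (γ - 1) := by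
    intro n
    calc a (n+1) = ∫ ω, (μ[fun ω => ‖Λ (n+1) ω‖ ^ γ | F n]) ω ∂μ :=
          (integral_condExp (F.le n) : ∫ ω, (μ[fun ω => ‖Λ (n+1) ω‖ ^ γ | F n]) ω ∂μ = _).symm
      _ ≤ ∫ ω, (‖Λ n ω‖ ^ γ + K₁ * s ^ (γ - 1)) ∂μ := by
          refine integral_mono_ae integrable_condExp ((hint n).add (integrable_const _)) ?_
          filter_upwards [hdrift_gamma n] with ω hω
          have h := arcs_young hγ hs hc₀ hc (norm_nonneg (Λ n ω))
          rw [hK₁]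
          linarith
      _ = a n + K₁ * s ^ (γ - 1) := by
          rw [integral_add (hint n) (integrable_const _), integral_const]
          simp [measure_univ]
          rfl
  set K₂ : ℝ := c + K₁ with hK₂
  have hK₂0 : 0 < K₂ := by positivity
  have hsp : (0:ℝ) < s ^ (γ - 1) := Real.rpow_pos_of_pos hs0 _
  have haN : ∀ n, a n ≤ (c + K₁ * n) * s ^ (γ - 1) := by
    intro n
    induction n with
    | zero => simpa using hinit_gamma
    | succ k ih =>
      have h := hstepA k
      push_cast
      push_cast at ih
      nlinarith
  have haN2 : ∀ n : ℕ, a n ≤ K₂ * ((n:ℝ) + 1) * s ^ (γ - 1) := by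
    intro n
    have h1 : c + K₁ * n ≤ K₂ * ((n:ℝ) + 1) := by
      rw [hK₂]
      nlinarith [hc.le, hK₁0.le, (Nat.cast_nonneg n : (0:ℝ) ≤ n)]
    calc a n ≤ (c + K₁ * n) * s ^ (γ - 1) := haN n
      _ ≤ K₂ * ((n:ℝ) + 1) * s ^ (γ - 1) := mul_le_mul_of_nonneg_right h1 hsp.le
  -- Step B : drift of the second moment
  have hstepB : ∀ n, b (n+1) ≤ b n - c₀' * M n + c' * s := by
    intro n
    calc b (n+1) = ∫ ω, (μ[fun ω => ‖Λ (n+1) ω‖ ^ (2:ℕ) | F n]) ω ∂μ :=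
          (integral_condExp (F.le n) : ∫ ω, (μ[fun ω => ‖Λ (n+1) ω‖ ^ (2:ℕ) | F n]) ω ∂μ = _).symm
      _ ≤ ∫ ω, (‖Λ n ω‖ ^ (2:ℕ) - c₀' * ‖Λ n ω‖ + c' * s) ∂μ :=
          integral_mono_ae integrable_condExp
            (((hint2 n).sub ((hint1 n).const_mul c₀')).add (integrable_const _))
            (hdrift_two n)
      _ = b n - c₀' * M n + c' * s := by
          have hf1 : Integrable (fun ω => ‖Λ n ω‖ ^ (2:ℕ) - c₀' * ‖Λ n ω‖) μ :=
            (hint2 n).sub ((hint1 n).const_mul c₀')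
          have hf2 : Integrable (fun ω => c₀' * ‖Λ n ω‖) μ := (hint1 n).const_mul c₀'
          rw [integral_add hf1 (integrable_const _), integral_sub (hint2 n) hf2,
            integral_const_mul, integral_const]
          simp [measure_univ]
          rfl
  -- interpolation
  have hinterp : ∀ n, ∀ l : ℝ, 0 < l → b n ≤ l * M n + a n / l ^ (γ - 2) := by
    intro n l hl
    calc b n ≤ ∫ ω, (l * ‖Λ n ω‖ + ‖Λ n ω‖ ^ γ / l ^ (γ - 2)) ∂μ :=
          integral_mono (hint2 n) (((hint1 n).const_mul l).add ((hint n).div_const _))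
            (fun ω => arcs_sq_le hγ hl (norm_nonneg _))
      _ = l * M n + a n / l ^ (γ - 2) := by
          have hf1 : Integrable (fun ω => l * ‖Λ n ω‖) μ := (hint1 n).const_mul l
          have hf2 : Integrable (fun ω => ‖Λ n ω‖ ^ γ / l ^ (γ - 2)) μ := (hint n).div_const _
          rw [integral_add hf1 hf2, integral_const_mul, integral_div]
  -- constants
  set R : ℝ := 2 * K₂ * (2 * c' / c₀') ^ (γ - 2) with hR
  have hR0 : 0 < R := by positivity
  set D : ℝ := 2 * max 1 (max c (max c' R)) with hD
  have hD0 : (0:ℝ) < D := by positivity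
  have hmax1 : (1:ℝ) ≤ max 1 (max c (max c' R)) := le_max_left _ _
  have hmaxc : c ≤ max 1 (max c (max c' R)) := le_max_of_le_right (le_max_left _ _)
  have hmaxc' : c' ≤ max 1 (max c (max c' R)) :=
    le_max_of_le_right (le_max_of_le_right (le_max_left _ _))
  have hmaxR : R ≤ max 1 (max c (max c' R)) :=
    le_max_of_le_right (le_max_of_le_right (le_max_right _ _))
  have hD1 : (1:ℝ) ≤ D / 2 := by rw [hD]; linarith
  have hDc : c ≤ D := by rw [hD]; linarith
  have hDc' : 2 * c' ≤ D := by rw [hD]; linarith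
  have hDR : R ≤ D / 2 := by rw [hD]; linarith
  refine ⟨D, hD0, ?_⟩
  set e : ℝ := (2 * γ - 3) / (γ - 1) with he
  set ι : ℝ := 1 / (γ - 1) with hι
  have hι0 : (0:ℝ) ≤ ι := by positivity
  have he1 : (1:ℝ) ≤ e := by
    rw [he, le_div_iff₀ hγ1]; linarith
  have hse : s ≤ s ^ e := by
    calc s = s ^ (1:ℝ) := (Real.rpow_one s).symm
      _ ≤ s ^ e := Real.rpow_le_rpow_of_exponent_le hs he1
  have hse0 : (0:ℝ) < s ^ e := Real.rpow_pos_of_pos hs0 _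
  intro n
  induction n with
  | zero =>
    show b 0 ≤ D * ((0:ℕ) + 1 : ℝ) ^ ι * s ^ e
    have h0 : ((0:ℕ) + 1 : ℝ) ^ ι = 1 := by norm_num
    rw [h0]
    have h1 : b 0 ≤ c * s := hinit_two
    have h2 : c * s ≤ D * s := mul_le_mul_of_nonneg_right hDc hs0.le
    have h3 : D * s ≤ D * s ^ e := mul_le_mul_of_nonneg_left hse hD0.le
    calc b 0 ≤ D * s ^ e := by linarith
      _ = D * 1 * s ^ e := by ring
  | succ k ih =>
    show b (k+1) ≤ D * ((k+1:ℕ) + 1 : ℝ) ^ ι * s ^ e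
    have hQcast : ((k+1:ℕ) + 1 : ℝ) = ((k:ℝ) + 1) + 1 := by push_cast; ring
    rw [hQcast]
    set P : ℝ := (k:ℝ) + 1 with hP
    set Q : ℝ := P + 1 with hQ
    have hP1 : (1:ℝ) ≤ P := by
      rw [hP]
      have := (Nat.cast_nonneg k : (0:ℝ) ≤ k)
      linarith
    have hQ0 : (0:ℝ) < Q := by rw [hQ]; linarith
    have hQ1 : (1:ℝ) ≤ Q := by rw [hQ]; linarith
    have hQι1 : (1:ℝ) ≤ Q ^ ι := Real.one_le_rpow hQ1 hι0
    have hPι0 : (0:ℝ) ≤ P ^ ι := Real.rpow_nonneg (by linarith) _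
    have hff : D * P ^ ι * s ^ e ≤ D * Q ^ ι * s ^ e := by
      have h := Real.rpow_le_rpow (by linarith : (0:ℝ) ≤ P) (by linarith : P ≤ Q) hι0
      have := mul_le_mul_of_nonneg_left h hD0.le
      exact mul_le_mul_of_nonneg_right this hse0.le
    have ihP : b k ≤ D * P ^ ι * s ^ e := ih
    rcases le_or_gt (b k) (D * Q ^ ι * s ^ e - c' * s) with hcase | hcase
    · -- small case
      have h := hstepB k
      have h2 : 0 ≤ c₀' * M k := mul_nonneg hc₀'.le (hM0 k)
      linarith
    · -- large case
      have hf2 : 2 * (c' * s) ≤ D * Q ^ ι * s ^ e := by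
        have h1' : D * 1 ≤ D * Q ^ ι := mul_le_mul_of_nonneg_left hQι1 hD0.le
        have h1 : D * s ≤ D * Q ^ ι * s :=
          mul_le_mul_of_nonneg_right (by linarith) hs0.le
        have h2 : D * Q ^ ι * s ≤ D * Q ^ ι * s ^ e :=
          mul_le_mul_of_nonneg_left hse
            (mul_nonneg hD0.le (Real.rpow_nonneg hQ0.le _))
        have h3' : 2 * c' * s ≤ D * s := mul_le_mul_of_nonneg_right hDc' hs0.le
        linarith
      have hbk : D * Q ^ ι * s ^ e / 2 ≤ b k := by linarith
      have hbk0 : 0 < b k := by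
        have : (0:ℝ) < D * Q ^ ι * s ^ e / 2 := by positivity
        linarith
      -- notation for the rpow quantities
      set X : ℝ := (b k) ^ (γ - 2) with hX
      set Y : ℝ := c₀' ^ (γ - 2) with hY
      set Z : ℝ := (2 * c') ^ (γ - 2) with hZ
      set W : ℝ := s ^ (γ - 2) with hW
      set S1 : ℝ := s ^ (γ - 1) with hS1
      set S2 : ℝ := s ^ (2 * γ - 3) with hS2
      set U : ℝ := (D / 2) ^ (γ - 1) with hU
      have hXpos : 0 < X := Real.rpow_pos_of_pos hbk0 _
      have hYpos : 0 < Y := Real.rpow_pos_of_pos hc₀' _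
      have hZpos : 0 < Z := Real.rpow_pos_of_pos (by linarith) _
      have hWpos : 0 < W := Real.rpow_pos_of_pos hs0 _
      have hS2pos : 0 < S2 := Real.rpow_pos_of_pos hs0 _
      have hUpos : 0 < U := Real.rpow_pos_of_pos (by linarith) _
      set l : ℝ := c₀' * b k / (2 * (c' * s)) with hl
      have hl0 : 0 < l := div_pos (mul_pos hc₀' hbk0) (by positivity)
      -- r1 : value of l ^ (γ - 2)
      have r1 : l ^ (γ - 2) = Y * X / (Z * W) := by
        rw [hl, show (2 : ℝ) * (c' * s) = (2 * c') * s by ring,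
          Real.div_rpow (by positivity) (by positivity),
          Real.mul_rpow hc₀'.le hbk0.le, Real.mul_rpow (by linarith) hs0.le]
      -- r2 : b k * X = (b k) ^ (γ - 1)
      have r2 : (b k) ^ (γ - 1) = b k * X := by
        have h' := Real.rpow_add hbk0 1 (γ - 2)
        rw [Real.rpow_one] at h'
        rw [hX, show γ - 1 = 1 + (γ - 2) by ring, h']
      -- r3 : lower bound on (b k) ^ (γ - 1)
      have r3 : U * Q * S2 ≤ (b k) ^ (γ - 1) := by
        have hF2 : (D / 2) * Q ^ ι * s ^ e ≤ b k := by linarith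
        have h1 : ((D / 2) * Q ^ ι * s ^ e) ^ (γ - 1) ≤ (b k) ^ (γ - 1) :=
          Real.rpow_le_rpow (by positivity) hF2 hγ1.le
        have h2 : ((D / 2) * Q ^ ι * s ^ e) ^ (γ - 1) = U * Q * S2 := by
          rw [Real.mul_rpow (by positivity) hse0.le,
            Real.mul_rpow (by positivity) (Real.rpow_nonneg hQ0.le _)]
          have h3 : (Q ^ ι) ^ (γ - 1) = Q := by
            rw [← Real.rpow_mul hQ0.le]
            rw [show ι * (γ - 1) = 1 by rw [hι]; field_simp]
            exact Real.rpow_one Q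
          have h4 : (s ^ e) ^ (γ - 1) = S2 := by
            rw [← Real.rpow_mul hs0.le]
            rw [show e * (γ - 1) = 2 * γ - 3 by rw [he]; field_simp]
          rw [h3, h4, hU]
        linarith [h2 ▸ h1]
      -- r4 : U * Y ≥ 2 * K₂ * Z
      have r4 : 2 * K₂ * Z ≤ U * Y := by
        have hRval : R * Y = 2 * K₂ * Z := by
          rw [hR, hZ, hY, Real.div_rpow (by linarith) hc₀'.le]
          field_simp
        have hRU : R ≤ U := by
          have h1 : D / 2 = (D / 2) ^ (1:ℝ) := (Real.rpow_one _).symm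
          have h2 : (D / 2) ^ (1:ℝ) ≤ U := by
            rw [hU]; exact Real.rpow_le_rpow_of_exponent_le hD1 (by linarith)
          linarith [hDR]
        calc 2 * K₂ * Z = R * Y := hRval.symm
          _ ≤ U * Y := mul_le_mul_of_nonneg_right hRU hYpos.le
      -- r5 : S1 * W = S2
      have r5 : S1 * W = S2 := by
        rw [hS1, hW, hS2, ← Real.rpow_add hs0]
        ring_nf
      -- the key estimate
      have hkey : a k / l ^ (γ - 2) ≤ b k / 2 := by
        have hchain : K₂ * P * S1 * (2 * (Z * W)) ≤ b k * (Y * X) := by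
          calc K₂ * P * S1 * (2 * (Z * W)) = 2 * K₂ * Z * (P * (S1 * W)) := by ring
            _ = 2 * K₂ * Z * (P * S2) := by rw [r5]
            _ ≤ 2 * K₂ * Z * (Q * S2) := by
                have hPQ : P * S2 ≤ Q * S2 :=
                  mul_le_mul_of_nonneg_right (by rw [hQ]; linarith) hS2pos.le
                exact mul_le_mul_of_nonneg_left hPQ (by positivity)
            _ ≤ U * Y * (Q * S2) := mul_le_mul_of_nonneg_right r4 (by positivity)
            _ = U * Q * S2 * Y := by ring
            _ ≤ (b k) ^ (γ - 1) * Y := mul_le_mul_of_nonneg_right r3 hYpos.le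
            _ = b k * (Y * X) := by rw [r2]; ring
        have hrhs : b k / 2 * l ^ (γ - 2) = b k * (Y * X) / (2 * (Z * W)) := by
          rw [r1]; ring
        have hgoal : a k ≤ b k / 2 * l ^ (γ - 2) := by
          rw [hrhs, le_div_iff₀ (by positivity : (0:ℝ) < 2 * (Z * W))]
          have h6 : a k ≤ K₂ * P * S1 := by rw [hP]; exact haN2 k
          calc a k * (2 * (Z * W)) ≤ K₂ * P * S1 * (2 * (Z * W)) :=
                mul_le_mul_of_nonneg_right h6 (by positivity)
            _ ≤ b k * (Y * X) := hchain
        exact (div_le_iff₀ (Real.rpow_pos_of_pos hl0 _)).mpr hgoal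
      -- conclude the large case
      have hinterpk := hinterp k l hl0
      have hMk : c' * s ≤ c₀' * M k := by
        have h2 : b k / 2 ≤ l * M k := by linarith
        have h3 : b k / 2 / l = c' * s / c₀' := by
          rw [hl]
          field_simp
        have h4 : c' * s / c₀' ≤ M k := by
          rw [← h3, div_le_iff₀ hl0]
          have hcomm : l * M k = M k * l := mul_comm _ _
          linarith
        calc c' * s = c' * s / c₀' * c₀' := by field_simp
          _ ≤ M k * c₀' := mul_le_mul_of_nonneg_right h4 hc₀'.le
          _ = c₀' * M k := mul_comm _ _
      have h5 := hstepB k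
      calc b (k+1) ≤ b k - c₀' * M k + c' * s := h5
        _ ≤ b k := by linarith
        _ ≤ D * P ^ ι * s ^ e := ihP
        _ ≤ D * Q ^ ι * s ^ e := hff
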